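/- The inverse quantum Cartan matrix coefficients vanish at multiples of the Coxeter number: c̃_{ij}(kh) = 0 for all i, j ∈ I and all integers k ≥ 1. -/

import Mathlib

open Matrix

/-- A simply-laced finite-type (`ADE`) generalized Cartan matrix. -/
structure IsADECartan {n : ℕ} (C : Matrix (Fin n) (Fin n) ℤ) : Prop where
  symm : ∀ i j, C i j = C j i
  diag : ∀ i, C i i = 2
  offdiag : ∀ i j, i ≠ j → C i j = 0 ∨ C i j = -1
  posDef : (C.map ((↑) : ℤ → ℝ)).PosDef
  connected : ∀ i j, Relation.ReflTransGen (fun a b => C a b = -1) i j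

/-- The quantum Cartan matrix `C(z)` over the field of formal Laurent series. -/
noncomputable def qCartan {n : ℕ} (C : Matrix (Fin n) (Fin n) ℤ) :
    Matrix (Fin n) (Fin n) (LaurentSeries ℚ) :=
  Matrix.of fun i j =>
    if i = j then HahnSeries.single (1 : ℤ) (1 : ℚ) + HahnSeries.single (-1 : ℤ) (1 : ℚ)
    else (C i j : LaurentSeries ℚ)

/-- The simple reflection `r_i` acting on the root lattice, written in the basis of
simple roots: `(r_i v)_i = v_i - Σ_j c_{ji} v_j` and `(r_i v)_k = v_k` for `k ≠ i`. -/
def simpleRefl {n : ℕ} (C : Matrix (Fin n) (Fin n) ℤ) (i : Fin n) (v : Fin n → ℤ) :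
    Fin n → ℤ :=
  fun k => if k = i then v i - ∑ j, C j i * v j else v k

/-- The product of the simple reflections indexed by a list `L` (first entry acting last
is irrelevant here; we compose left-to-right: `r_{i₁} ∘ r_{i₂} ∘ ⋯`). -/
def coxeterOf {n : ℕ} (C : Matrix (Fin n) (Fin n) ℤ) (L : List (Fin n)) :
    (Fin n → ℤ) → Fin n → ℤ :=
  (L.map (simpleRefl C)).foldr (· ∘ ·) id

/-- The Coxeter element `τ = r_1 r_2 ⋯ r_n` (a product of all simple reflections, each
occurring once).  Its order is the Coxeter number `h`. -/
def coxeterElem {n : ℕ} (C : Matrix (Fin n) (Fin n) ℤ) : (Fin n → ℤ) → Fin n → ℤ :=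
  coxeterOf C (List.finRange n)

namespace S6

variable {n : ℕ}

/-- Matrix of the simple reflection `r_i`. -/
def Rmat (C : Matrix (Fin n) (Fin n) ℤ) (i : Fin n) : Matrix (Fin n) (Fin n) ℤ :=
  Matrix.of fun k j => (if k = j then 1 else 0) - (if k = i then C j i else 0)

lemma simpleRefl_eq_mulVec (C : Matrix (Fin n) (Fin n) ℤ) (i : Fin n) (v : Fin n → ℤ) :
    simpleRefl C i v = (Rmat C i) *ᵥ v := by
  funext k
  simp only [simpleRefl, Rmat, Matrix.mulVec, dotProduct, Matrix.of_apply, sub_mul,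
    ite_mul, one_mul, zero_mul, Finset.sum_sub_distrib]
  by_cases hk : k = i
  · subst hk
    simp [Finset.sum_ite_eq]
  · simp [hk, Finset.sum_ite_eq]

lemma coxeterOf_cons (C : Matrix (Fin n) (Fin n) ℤ) (a : Fin n) (L : List (Fin n)) :
    coxeterOf C (a :: L) = simpleRefl C a ∘ coxeterOf C L := rfl

lemma coxeterOf_nil (C : Matrix (Fin n) (Fin n) ℤ) :
    coxeterOf C ([] : List (Fin n)) = id := rfl

/-- Product of reflection matrices along a list. -/
def listProd (C : Matrix (Fin n) (Fin n) ℤ) (L : List (Fin n)) : Matrix (Fin n) (Fin n) ℤ :=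
  (L.map (Rmat C)).prod

lemma coxeterOf_eq_mulVec (C : Matrix (Fin n) (Fin n) ℤ) (L : List (Fin n)) (v : Fin n → ℤ) :
    coxeterOf C L v = (listProd C L) *ᵥ v := by
  induction L with
  | nil => simp [coxeterOf_nil, listProd, Matrix.one_mulVec]
  | cons a L ih =>
    show simpleRefl C a (coxeterOf C L v) = _
    rw [ih, simpleRefl_eq_mulVec]
    show _ = ((a :: L).map (Rmat C)).prod *ᵥ v
    rw [List.map_cons, List.prod_cons, ← Matrix.mulVec_mulVec]
    rfl

/-- Matrix of the Coxeter element. -/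
def Tmat (C : Matrix (Fin n) (Fin n) ℤ) : Matrix (Fin n) (Fin n) ℤ :=
  listProd C (List.finRange n)

lemma coxeterElem_eq_mulVec (C : Matrix (Fin n) (Fin n) ℤ) (v : Fin n → ℤ) :
    coxeterElem C v = (Tmat C) *ᵥ v :=
  coxeterOf_eq_mulVec C _ v

lemma iterate_coxeterElem (C : Matrix (Fin n) (Fin n) ℤ) (m : ℕ) (v : Fin n → ℤ) :
    (coxeterElem C)^[m] v = (Tmat C ^ m) *ᵥ v := by
  induction m with
  | zero => simp
  | succ m ih =>
    rw [Function.iterate_succ_apply', ih, coxeterElem_eq_mulVec, Matrix.mulVec_mulVec,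
      ← pow_succ']

lemma Tpow_eq_one (C : Matrix (Fin n) (Fin n) ℤ) (h : ℕ)
    (hper : (coxeterElem C)^[h] = id) : Tmat C ^ h = 1 := by
  ext i j
  have h1 : (Tmat C ^ h) *ᵥ (Pi.single j 1) = Pi.single j 1 := by
    rw [← iterate_coxeterElem, hper]; rfl
  have h2 := congrFun h1 i
  rw [Matrix.mulVec_single] at h2
  simpa [Matrix.one_apply, Pi.single_apply] using h2

lemma sum_split (i : Fin n) (f : Fin n → ℤ) :
    ∑ j, f j = (∑ j ∈ Finset.univ.filter (fun j => j < i), f j) + f i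
      + ∑ j ∈ Finset.univ.filter (fun j => i < j), f j := by
  have key : ∀ j : Fin n, f j =
      (if j < i then f j else 0) + ((if j = i then f j else 0) + (if i < j then f j else 0)) := by
    intro j
    rcases lt_trichotomy j i with hj | hj | hj
    · simp [hj, hj.ne, not_lt_of_gt hj]
    · simp [hj, lt_irrefl]
    · simp [hj, hj.ne', not_lt_of_gt hj]
  rw [Finset.sum_congr rfl fun j _ => key j, Finset.sum_add_distrib, Finset.sum_add_distrib]
  rw [Finset.sum_filter, Finset.sum_filter]
  simp [add_assoc]

lemma coxeterOf_apply_notMem (C : Matrix (Fin n) (Fin n) ℤ) (L : List (Fin n))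
    (v : Fin n → ℤ) (j : Fin n) (hj : j ∉ L) : coxeterOf C L v j = v j := by
  induction L with
  | nil => rfl
  | cons a L ih =>
    rw [coxeterOf_cons]
    have hja : j ≠ a := by
      intro hh; exact hj (hh ▸ (List.mem_cons_self : a ∈ a :: L))
    show simpleRefl C a (coxeterOf C L v) j = v j
    rw [simpleRefl]
    simp only [if_neg hja]
    exact ih (fun hm => hj (List.mem_cons_of_mem a hm))

lemma le_of_mem_drop_finRange {k : ℕ} {a : Fin n} (ha : a ∈ (List.finRange n).drop k) :
    k ≤ (a : ℕ) := by
  rw [List.mem_iff_getElem] at ha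
  obtain ⟨i, hi, rfl⟩ := ha
  simp only [List.getElem_drop, List.getElem_finRange]
  simp

lemma master (C : Matrix (Fin n) (Fin n) ℤ) (hC : IsADECartan C) :
    ∀ m k : ℕ, k = n - m → ∀ (v : Fin n → ℤ) (i : Fin n), k ≤ (i : ℕ) →
      coxeterOf C ((List.finRange n).drop k) v i
        = -(v i) - (∑ j ∈ Finset.univ.filter (fun j => j < i), C j i * v j)
          - ∑ j ∈ Finset.univ.filter (fun j => i < j),
              C j i * coxeterOf C ((List.finRange n).drop k) v j := by
  intro m
  induction m with
  | zero =>
    intro k hk v i hi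
    exfalso
    have := i.isLt
    omega
  | succ m ih =>
    intro k hk v i hi
    by_cases hn' : n ≤ m
    · exact ih k (by omega) v i hi
    have hkn : k < n := by omega
    have hk1 : k + 1 = n - m := by omega
    have hdrop : (List.finRange n).drop k
        = (⟨k, hkn⟩ : Fin n) :: (List.finRange n).drop (k + 1) := by
      rw [List.drop_eq_getElem_cons (by rw [List.length_finRange]; exact hkn)]
      congr 1
      simp [List.getElem_finRange]
    set x := coxeterOf C ((List.finRange n).drop (k + 1)) v with hxdef
    have hw : coxeterOf C ((List.finRange n).drop k) v = simpleRefl C ⟨k, hkn⟩ x := by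
      rw [hdrop, coxeterOf_cons]; rfl
    have hxv : ∀ j : Fin n, (j : ℕ) < k + 1 → x j = v j := by
      intro j hj
      exact coxeterOf_apply_notMem _ _ _ _
        (fun hmem => by have := le_of_mem_drop_finRange hmem; omega)
    have hwx : ∀ j : Fin n, j ≠ ⟨k, hkn⟩ →
        coxeterOf C ((List.finRange n).drop k) v j = x j := by
      intro j hj
      rw [hw]
      simp [simpleRefl, hj]
    rcases eq_or_lt_of_le hi with heq | hlt
    · -- i = ⟨k, hkn⟩
      have hia : i = ⟨k, hkn⟩ := Fin.ext heq.symm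
      have hsr : coxeterOf C ((List.finRange n).drop k) v i = x i - ∑ j, C j i * x j := by
        rw [hw]
        show (if i = ⟨k, hkn⟩ then x ⟨k, hkn⟩ - ∑ j, C j ⟨k, hkn⟩ * x j else x i) = _
        rw [if_pos hia, ← hia]
      rw [hsr, sum_split i (fun j => C j i * x j)]
      have hx_i : x i = v i := hxv i (by omega)
      have hlow : ∑ j ∈ Finset.univ.filter (fun j => j < i), C j i * x j
          = ∑ j ∈ Finset.univ.filter (fun j => j < i), C j i * v j := by
        refine Finset.sum_congr rfl fun j hj => ?_
        have hj' : j < i := (Finset.mem_filter.mp hj).2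
        rw [hxv j (by omega)]
      have hhigh : ∑ j ∈ Finset.univ.filter (fun j => i < j),
            C j i * coxeterOf C ((List.finRange n).drop k) v j
          = ∑ j ∈ Finset.univ.filter (fun j => i < j), C j i * x j := by
        refine Finset.sum_congr rfl fun j hj => ?_
        have hj' : i < j := (Finset.mem_filter.mp hj).2
        rw [hwx j (by intro hh; rw [hh, ← hia] at hj'; exact lt_irrefl _ hj')]
      rw [hlow, hhigh, hx_i, hC.diag i]
      ring
    · -- k < i
      have hne : i ≠ ⟨k, hkn⟩ := by
        intro hh; rw [hh] at hlt; simp at hlt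
      have h1 := hwx i hne
      have h2 := ih (k + 1) hk1 v i (by omega)
      have hhigh : ∑ j ∈ Finset.univ.filter (fun j => i < j),
            C j i * coxeterOf C ((List.finRange n).drop k) v j
          = ∑ j ∈ Finset.univ.filter (fun j => i < j), C j i * x j := by
        refine Finset.sum_congr rfl fun j hj => ?_
        have hj' : i < j := (Finset.mem_filter.mp hj).2
        have : j ≠ ⟨k, hkn⟩ := by
          intro hh
          have : (j : ℕ) = k := by rw [hh]
          omega
        rw [hwx j this]
      rw [h1, hhigh, ← hxdef] at *
      exact h2

/-- Upper unitriangular part of `C`. -/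
def Umat (C : Matrix (Fin n) (Fin n) ℤ) : Matrix (Fin n) (Fin n) ℤ :=
  Matrix.of fun i j => if i = j then 1 else if i < j then C i j else 0

/-- Lower unitriangular part of `C`. -/
def Lmat (C : Matrix (Fin n) (Fin n) ℤ) : Matrix (Fin n) (Fin n) ℤ :=
  Matrix.of fun i j => if i = j then 1 else if j < i then C i j else 0

lemma Umat_add_Lmat (C : Matrix (Fin n) (Fin n) ℤ) (hC : IsADECartan C) :
    Umat C + Lmat C = C := by
  ext i j
  simp only [Umat, Lmat, Matrix.add_apply, Matrix.of_apply]
  rcases lt_trichotomy i j with hij | hij | hij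
  · simp [hij, hij.ne, not_lt_of_gt hij]
  · subst hij; simp [hC.diag i]
  · simp [hij, hij.ne', not_lt_of_gt hij]

lemma U_mul_T (C : Matrix (Fin n) (Fin n) ℤ) (hC : IsADECartan C) :
    Umat C * Tmat C = -(Lmat C) := by
  ext i m
  have hw : ∀ jj, Tmat C jj m = coxeterElem C (Pi.single m 1) jj := by
    intro jj
    rw [coxeterElem_eq_mulVec, Matrix.mulVec_single]
    simp
  have hm := master C hC n 0 (by omega) (Pi.single m 1) i (Nat.zero_le _)
  rw [List.drop_zero] at hm
  have hcox : coxeterOf C (List.finRange n) = coxeterElem C := rfl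
  rw [hcox] at hm
  rw [Matrix.mul_apply]
  rw [sum_split i (fun j => Umat C i j * Tmat C j m)]
  have e1 : ∑ j ∈ Finset.univ.filter (fun j => j < i), Umat C i j * Tmat C j m = 0 := by
    refine Finset.sum_eq_zero fun j hj => ?_
    have hj' : j < i := (Finset.mem_filter.mp hj).2
    simp [Umat, hj'.ne', not_lt_of_gt hj']
  have e2 : Umat C i i * Tmat C i m = coxeterElem C (Pi.single m 1) i := by
    simp [Umat, hw i]
  have e3 : ∑ j ∈ Finset.univ.filter (fun j => i < j), Umat C i j * Tmat C j m
      = ∑ j ∈ Finset.univ.filter (fun j => i < j),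
          C j i * coxeterElem C (Pi.single m 1) j := by
    refine Finset.sum_congr rfl fun j hj => ?_
    have hj' : i < j := (Finset.mem_filter.mp hj).2
    rw [hw j]
    simp [Umat, hj'.ne, hj', hC.symm i j]
  rw [e1, e2, e3, zero_add, hm]
  have e4 : ∑ j ∈ Finset.univ.filter (fun j => j < i), C j i * (Pi.single m 1 : Fin n → ℤ) j
      = if m < i then C m i else 0 := by
    rw [Finset.sum_congr rfl (fun j _ => by rw [Pi.single_apply, mul_ite, mul_one, mul_zero])]
    rw [Finset.sum_ite_eq' (Finset.univ.filter (fun j => j < i)) m (fun j => C j i)]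
    simp
  rw [e4]
  simp only [Pi.single_apply, Matrix.neg_apply, Lmat, Matrix.of_apply]
  by_cases him : i = m
  · subst him; simp
  · simp only [him, if_false]
    by_cases hmi : m < i
    · simp [hmi, hC.symm i m, Ne.symm him]
    · simp [hmi, Ne.symm him]

lemma sum_sum_pos (C : Matrix (Fin n) (Fin n) ℤ) (hC : IsADECartan C)
    (S : Finset (Fin n)) (hS : S.Nonempty) :
    0 < ∑ i ∈ S, ∑ j ∈ S, C i j := by
  set x : Fin n → ℝ := fun i => if i ∈ S then 1 else 0 with hxdef
  have hx : x ≠ 0 := by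
    obtain ⟨v, hv⟩ := hS
    intro hfun
    have := congrFun hfun v
    simp [hxdef, hv] at this
  have hp := (Matrix.posDef_iff_dotProduct_mulVec.mp hC.posDef).2 hx
  have hcalc : star x ⬝ᵥ (C.map ((↑) : ℤ → ℝ)) *ᵥ x
      = ((∑ i ∈ S, ∑ j ∈ S, C i j : ℤ) : ℝ) := by
    have hstar : star x = x := by
      funext i; simp [hxdef]
    rw [hstar]
    simp only [dotProduct, Matrix.mulVec, Matrix.map_apply, hxdef,
      ite_mul, mul_ite, one_mul, mul_one, zero_mul, mul_zero]
    push_cast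
    rw [Finset.sum_ite_mem, Finset.univ_inter]
    refine Finset.sum_congr rfl fun i _ => ?_
    rw [Finset.sum_ite_mem, Finset.univ_inter]
  rw [hcalc] at hp
  exact_mod_cast hp

lemma exists_leaf (C : Matrix (Fin n) (Fin n) ℤ) (hC : IsADECartan C)
    (S : Finset (Fin n)) (hS : S.Nonempty) :
    ∃ v ∈ S, ((S.erase v).filter (fun j => C v j = -1)).card ≤ 1 := by
  by_contra hcon
  push_neg at hcon
  have hrow : ∀ v ∈ S, ∑ j ∈ S, C v j ≤ 0 := by
    intro v hv
    have hsplit : ∑ j ∈ S, C v j = C v v + ∑ j ∈ S.erase v, C v j :=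
      (Finset.add_sum_erase S _ hv).symm
    have herase : ∑ j ∈ S.erase v, C v j
        = -(((S.erase v).filter (fun j => C v j = -1)).card : ℤ) := by
      rw [← Finset.sum_filter_add_sum_filter_not (S.erase v) (fun j => C v j = -1)]
      have h1 : ∑ j ∈ (S.erase v).filter (fun j => C v j = -1), C v j
          = -(((S.erase v).filter (fun j => C v j = -1)).card : ℤ) := by
        rw [Finset.sum_congr rfl (fun j hj => (Finset.mem_filter.mp hj).2)]
        simp
      have h2 : ∑ j ∈ (S.erase v).filter (fun j => ¬ C v j = -1), C v j = 0 := by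
        refine Finset.sum_eq_zero fun j hj => ?_
        have hj' := Finset.mem_filter.mp hj
        have hjv : j ≠ v := Finset.ne_of_mem_erase hj'.1
        rcases hC.offdiag v j (Ne.symm hjv) with hh | hh
        · exact hh
        · exact absurd hh hj'.2
      rw [h1, h2, add_zero]
    have hcard := hcon v hv
    rw [hsplit, herase, hC.diag v]
    have : (2 : ℤ) ≤ (((S.erase v).filter (fun j => C v j = -1)).card : ℤ) := by
      exact_mod_cast hcard
    omega
  have hpos := sum_sum_pos C hC S hS
  have hneg : ∑ i ∈ S, ∑ j ∈ S, C i j ≤ 0 := Finset.sum_nonpos hrow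
  omega

lemma exists_potential (C : Matrix (Fin n) (Fin n) ℤ) (hC : IsADECartan C) :
    ∃ φ : Fin n → ℤ, ∀ i j : Fin n, C i j = -1 → i < j → φ j = φ i + 1 := by
  suffices h : ∀ (N : ℕ) (S : Finset (Fin n)), S.card ≤ N →
      ∃ φ : Fin n → ℤ, ∀ i ∈ S, ∀ j ∈ S, C i j = -1 → i < j → φ j = φ i + 1 by
    obtain ⟨φ, hφ⟩ := h Finset.univ.card Finset.univ le_rfl
    exact ⟨φ, fun i j h1 h2 => hφ i (Finset.mem_univ i) j (Finset.mem_univ j) h1 h2⟩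
  intro N
  induction N with
  | zero =>
    intro S hS
    have : S = ∅ := Finset.card_eq_zero.mp (le_antisymm hS (Nat.zero_le _))
    subst this
    exact ⟨0, by simp⟩
  | succ N ihN =>
    intro S hS
    rcases S.eq_empty_or_nonempty with rfl | hne
    · exact ⟨0, by simp⟩
    obtain ⟨v, hv, hleaf⟩ := exists_leaf C hC S hne
    obtain ⟨φ, hφ⟩ := ihN (S.erase v)
      (by have := Finset.card_erase_of_mem hv; omega)
    rcases Finset.eq_empty_or_nonempty ((S.erase v).filter (fun j => C v j = -1)) with
      hN0 | ⟨u, hu⟩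
    · refine ⟨φ, ?_⟩
      intro i hi j hj hij hlt
      by_cases hi' : i = v
      · exfalso
        subst hi'
        have : j ∈ (S.erase i).filter (fun j => C i j = -1) :=
          Finset.mem_filter.mpr ⟨Finset.mem_erase.mpr ⟨hlt.ne', hj⟩, hij⟩
        rw [hN0] at this
        exact absurd this (Finset.notMem_empty j)
      by_cases hj' : j = v
      · exfalso
        subst hj'
        have : i ∈ (S.erase j).filter (fun k => C j k = -1) :=
          Finset.mem_filter.mpr ⟨Finset.mem_erase.mpr ⟨hlt.ne, hi⟩,
            by rw [hC.symm]; exact hij⟩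
        rw [hN0] at this
        exact absurd this (Finset.notMem_empty i)
      · exact hφ i (Finset.mem_erase.mpr ⟨hi', hi⟩) j (Finset.mem_erase.mpr ⟨hj', hj⟩) hij hlt
    · have hu' := Finset.mem_filter.mp hu
      have huv : u ≠ v := Finset.ne_of_mem_erase hu'.1
      have huniq : ∀ j, j ∈ (S.erase v).filter (fun j => C v j = -1) → j = u :=
        fun j hj => Finset.card_le_one.mp hleaf j hj u hu
      refine ⟨Function.update φ v (if v < u then φ u - 1 else φ u + 1), ?_⟩
      intro i hi j hj hij hlt
      rcases eq_or_ne i v with rfl | hiv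
      · have hj' : j = u := huniq j
          (Finset.mem_filter.mpr ⟨Finset.mem_erase.mpr ⟨hlt.ne', hj⟩, hij⟩)
        subst hj'
        rw [Function.update_of_ne huv, Function.update_self, if_pos hlt]
        ring
      rcases eq_or_ne j v with rfl | hjv
      · have hi' : i = u := huniq i
          (Finset.mem_filter.mpr ⟨Finset.mem_erase.mpr ⟨hiv, hi⟩,
            by rw [hC.symm]; exact hij⟩)
        subst hi'
        rw [Function.update_self, Function.update_of_ne huv,
          if_neg (lt_asymm hlt)]
      · rw [Function.update_of_ne hjv, Function.update_of_ne hiv]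
        exact hφ i (Finset.mem_erase.mpr ⟨hiv, hi⟩) j (Finset.mem_erase.mpr ⟨hjv, hj⟩) hij hlt

/-- Chebyshev-like polynomials: `P₀ = 0`, `P₁ = 1`, `P_{m+2} = X P_{m+1} - P_m`. -/
noncomputable def cheb : ℕ → Polynomial ℤ
  | 0 => 0
  | 1 => 1
  | (m + 2) => Polynomial.X * cheb (m + 1) - cheb m

lemma cheb_zero : cheb 0 = 0 := rfl
lemma cheb_one : cheb 1 = 1 := rfl
lemma cheb_add_two (m : ℕ) : cheb (m + 2) = Polynomial.X * cheb (m + 1) - cheb m := by rw [cheb]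

lemma cheb_mu (μ : ℂ) (hμ : μ ≠ 0) :
    ∀ m : ℕ, (μ - μ⁻¹) * (Polynomial.aeval (μ + μ⁻¹) (cheb m)) = μ ^ m - (μ⁻¹) ^ m := by
  have hinv : μ * μ⁻¹ = 1 := mul_inv_cancel₀ hμ
  intro m
  induction m using Nat.twoStepInduction with
  | zero => simp [cheb_zero]
  | one => simp [cheb_one]
  | more m ih0 ih1 =>
    rw [cheb_add_two, map_sub, _root_.map_mul, Polynomial.aeval_X]
    ring_nf
    ring_nf at ih0 ih1
    linear_combination (μ + μ⁻¹) * ih1 - ih0 + (μ ^ m - (μ⁻¹) ^ m) * hinv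

lemma mulVec_cancel {M : Matrix (Fin n) (Fin n) ℂ} (hM : IsUnit M.det)
    {x y : Fin n → ℂ} (hxy : M *ᵥ x = M *ᵥ y) : x = y := by
  have h2 := congrArg (fun z => M⁻¹ *ᵥ z) hxy
  simpa [Matrix.mulVec_mulVec, Matrix.nonsing_inv_mul M hM, Matrix.one_mulVec] using h2

lemma eig_root (C : Matrix (Fin n) (Fin n) ℤ) (hC : IsADECartan C)
    (h : ℕ) (hTh : Tmat C ^ h = 1)
    (t : ℝ) (v : Fin n → ℝ) (hv0 : v ≠ 0)
    (hv : ∀ i, ∑ j, (C i j : ℝ) * v j = (2 - t) * v i) :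
    Polynomial.aeval t (cheb h) = 0 := by
  classical
  obtain ⟨φ, hφ⟩ := exists_potential C hC
  have hdetC : C.det ≠ 0 := by
    have h0 := hC.posDef.det_pos
    have hdd : (C.map ((↑) : ℤ → ℝ)).det = ((C.det : ℤ) : ℝ) := by
      have e : C.map ((↑) : ℤ → ℝ) = (Int.castRingHom ℝ).mapMatrix C := rfl
      rw [e, ← RingHom.map_det]
      simp
    rw [hdd] at h0
    exact_mod_cast h0.ne'
  -- complex setup
  obtain ⟨μ, hq⟩ : ∃ μ : ℂ, μ^2 - (t : ℂ) * μ + 1 = 0 := by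
    obtain ⟨s, hs⟩ := IsAlgClosed.exists_pow_nat_eq ((t : ℂ)^2 - 4) (n := 2) (by norm_num)
    exact ⟨((t : ℂ) + s) / 2, by linear_combination hs / 4⟩
  have hμ0 : μ ≠ 0 := by
    intro h0; rw [h0] at hq; norm_num at hq
  have htμ : (t : ℂ) = μ + μ⁻¹ := by
    field_simp
    linear_combination -hq
  set φM := (Int.castRingHom ℂ).mapMatrix (m := Fin n) with hφM
  have happly : ∀ (M : Matrix (Fin n) (Fin n) ℤ) i j, φM M i j = ((M i j : ℤ) : ℂ) := by
    intro M i j; rw [hφM]; simp [RingHom.mapMatrix_apply]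
  have hUT : φM (Umat C) * φM (Tmat C) = -(φM (Lmat C)) := by
    rw [← _root_.map_mul, U_mul_T C hC, map_neg]
  have hThC : φM (Tmat C) ^ h = 1 := by rw [← map_pow, hTh, _root_.map_one]
  set vc : Fin n → ℂ := fun i => ((v i : ℝ) : ℂ) with hvc
  set w : Fin n → ℂ := fun i => μ ^ (φ i) * vc i with hwdef
  have hsumall : ∀ i, ∑ j, ((C i j : ℤ) : ℂ) * vc j = ((2 : ℂ) - t) * vc i := by
    intro i
    have h1 := congrArg (fun r : ℝ => (r : ℂ)) (hv i)
    push_cast at h1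
    convert h1 using 2 <;> norm_num
  have key1 : (φM (Umat C) + μ^2 • φM (Lmat C)) *ᵥ w = 0 := by
    funext i
    simp only [Matrix.mulVec, dotProduct, Matrix.add_apply, Matrix.smul_apply,
      smul_eq_mul, Pi.zero_apply]
    have hsummand : ∀ j, (φM (Umat C) i j + μ^2 * φM (Lmat C) i j) * w j
        = if j = i then (1 + μ^2) * w i else μ ^ (φ i + 1) * (((C i j : ℤ) : ℂ) * vc j) := by
      intro j
      by_cases hji : j = i
      · subst hji
        rw [if_pos rfl, happly, happly]
        simp [Umat, Lmat]
      · rw [if_neg hji, happly, happly]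
        rcases hC.offdiag i j (Ne.symm hji) with hcij | hcij
        · have hUz : Umat C i j = 0 := by
            simp only [Umat, Matrix.of_apply, if_neg (Ne.symm hji)]
            split_ifs <;> simp [hcij]
          have hLz : Lmat C i j = 0 := by
            simp only [Lmat, Matrix.of_apply, if_neg (Ne.symm hji)]
            split_ifs <;> simp [hcij]
          rw [hUz, hLz, hcij]
          push_cast
          ring
        · rcases lt_or_gt_of_ne (Ne.symm hji) with hij | hij
          · -- i < j
            have hUz : Umat C i j = -1 := by
              simp only [Umat, Matrix.of_apply, if_neg (Ne.symm hji), if_pos hij]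
              exact hcij
            have hLz : Lmat C i j = 0 := by
              simp only [Lmat, Matrix.of_apply, if_neg (Ne.symm hji),
                if_neg (not_lt_of_gt hij)]
            have hφj : φ j = φ i + 1 := hφ i j hcij hij
            rw [hUz, hLz, hcij, hwdef]
            simp only []
            rw [hφj, zpow_add_one₀ hμ0]
            push_cast
            ring
          · -- j < i
            have hUz : Umat C i j = 0 := by
              simp only [Umat, Matrix.of_apply, if_neg (Ne.symm hji),
                if_neg (not_lt_of_gt hij)]
            have hLz : Lmat C i j = -1 := by
              simp only [Lmat, Matrix.of_apply, if_neg (Ne.symm hji), if_pos hij]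
              exact hcij
            have hφj : φ i = φ j + 1 := hφ j i (by rw [hC.symm]; exact hcij) hij
            have hzz : μ ^ (2:ℕ) * μ ^ (φ j) = μ ^ (φ i + 1) := by
              rw [← zpow_natCast μ 2, ← zpow_add₀ hμ0]
              congr 1
              omega
            rw [hUz, hLz, hcij, hwdef]
            simp only []
            push_cast
            calc (0 + μ^2 * (-1)) * (μ ^ (φ j) * vc j)
                = -((μ ^ (2:ℕ) * μ ^ (φ j)) * vc j) := by ring
              _ = -((μ ^ (φ i + 1)) * vc j) := by rw [hzz]
              _ = μ ^ (φ i + 1) * (-1 * vc j) := by ring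
    rw [Finset.sum_congr rfl (fun j _ => hsummand j)]
    rw [← Finset.add_sum_erase Finset.univ _ (Finset.mem_univ i), if_pos rfl]
    have herase : ∑ j ∈ Finset.univ.erase i,
          (if j = i then (1 + μ^2) * w i else μ ^ (φ i + 1) * (((C i j : ℤ) : ℂ) * vc j))
        = μ ^ (φ i + 1) * (∑ j ∈ Finset.univ.erase i, ((C i j : ℤ) : ℂ) * vc j) := by
      rw [Finset.mul_sum]
      exact Finset.sum_congr rfl fun j hj => by rw [if_neg (Finset.ne_of_mem_erase hj)]
    rw [herase]
    have hsum2 : ∑ j ∈ Finset.univ.erase i, ((C i j : ℤ) : ℂ) * vc j = -(t : ℂ) * vc i := by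
      have hall := hsumall i
      have hsplit : ((C i i : ℤ) : ℂ) * vc i
            + ∑ j ∈ Finset.univ.erase i, ((C i j : ℤ) : ℂ) * vc j
          = ∑ j, ((C i j : ℤ) : ℂ) * vc j := Finset.add_sum_erase Finset.univ
        (fun j => ((C i j : ℤ) : ℂ) * vc j) (Finset.mem_univ i)
      have h2 : ((C i i : ℤ) : ℂ) = 2 := by rw [hC.diag i]; norm_num
      rw [h2, hall] at hsplit
      linear_combination hsplit
    rw [hsum2, hwdef]
    simp only []
    rw [zpow_add_one₀ hμ0]
    linear_combination (vc i * μ ^ (φ i)) * hq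
  -- w nonzero
  obtain ⟨i0, hi0⟩ := Function.ne_iff.mp hv0
  simp only [Pi.zero_apply] at hi0
  have hwi0 : w i0 ≠ 0 := by
    rw [hwdef]
    exact mul_ne_zero (zpow_ne_zero _ hμ0) (Complex.ofReal_ne_zero.mpr hi0)
  have hw0 : w ≠ 0 := fun h0 => hwi0 (congrFun h0 i0)
  have key1' : φM (Umat C) *ᵥ w + μ^2 • (φM (Lmat C) *ᵥ w) = 0 := by
    rw [← Matrix.smul_mulVec, ← Matrix.add_mulVec]
    exact key1
  -- U is invertible
  have hdetU : IsUnit (φM (Umat C)).det := by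
    have : (φM (Umat C)).det = 1 := by
      rw [Matrix.det_of_upperTriangular]
      · refine Finset.prod_eq_one fun i _ => ?_
        rw [happly]
        simp [Umat]
      · intro i j hji
        have hji' : j < i := hji
        rw [happly]
        simp only [Umat, Matrix.of_apply]
        rw [if_neg (ne_of_gt hji'), if_neg (not_lt_of_gt hji')]
        norm_num
    rw [this]
    exact isUnit_one
  have hTw : φM (Tmat C) *ᵥ w = (μ^2)⁻¹ • w := by
    apply mulVec_cancel hdetU
    rw [Matrix.mulVec_mulVec, hUT, Matrix.neg_mulVec, Matrix.mulVec_smul]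
    funext i
    have h1 := congrFun key1' i
    simp only [Pi.add_apply, Pi.smul_apply, Pi.zero_apply, smul_eq_mul] at h1
    simp only [Pi.neg_apply, Pi.smul_apply, smul_eq_mul]
    have hμ2 : (μ^2 : ℂ) ≠ 0 := pow_ne_zero 2 hμ0
    field_simp
    linear_combination -h1
  have hiter : ∀ m : ℕ, (φM (Tmat C)) ^ m *ᵥ w = (((μ^2)⁻¹) ^ m) • w := by
    intro m
    induction m with
    | zero => simp [Matrix.one_mulVec]
    | succ m ih =>
      rw [pow_succ', ← Matrix.mulVec_mulVec, ih, Matrix.mulVec_smul, hTw,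
        smul_smul, ← pow_succ]
  have hμ2h : (μ^2) ^ h = 1 := by
    have h1 := hiter h
    rw [hThC, Matrix.one_mulVec] at h1
    have h2 := congrFun h1 i0
    simp only [Pi.smul_apply, smul_eq_mul] at h2
    have h3 : ((((μ^2)⁻¹) ^ h) - 1) * w i0 = 0 := by linear_combination -h2
    rcases mul_eq_zero.mp h3 with h4 | h4
    · have h5 : ((μ^2) ^ h)⁻¹ = 1 := by rw [← inv_pow]; linear_combination h4
      exact inv_eq_one.mp h5
    · exact absurd h4 hwi0
  have hμ21 : μ^2 ≠ 1 := by
    intro h1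
    have hsum : φM (Umat C) + φM (Lmat C) = φM C := by
      rw [← map_add, Umat_add_Lmat C hC]
    have hCw : φM C *ᵥ w = 0 := by
      rw [← hsum, Matrix.add_mulVec]
      rw [h1, one_smul] at key1'
      exact key1'
    have hdetCC : IsUnit (φM C).det := by
      have : (φM C).det = ((C.det : ℤ) : ℂ) := by
        rw [hφM, ← RingHom.map_det]
        simp
      rw [this]
      exact isUnit_iff_ne_zero.mpr (by exact_mod_cast hdetC)
    have : w = 0 := mulVec_cancel hdetCC (by rw [hCw, Matrix.mulVec_zero])
    exact hw0 this
  -- conclude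
  have hkey := cheb_mu μ hμ0 h
  rw [← htμ] at hkey
  have hsq : (μ ^ h) * (μ ^ h) = 1 := by
    rw [← pow_add]
    have : h + h = 2 * h := by ring
    rw [this, pow_mul]
    exact hμ2h
  have hrhs : μ ^ h - (μ⁻¹) ^ h = 0 := by
    rw [inv_pow, inv_eq_of_mul_eq_one_left hsq]
    ring
  rw [hrhs] at hkey
  have hsubne : μ - μ⁻¹ ≠ 0 := by
    intro h0
    have h1 : μ = μ⁻¹ := sub_eq_zero.mp h0
    have h2 : μ ^ 2 = 1 := by
      rw [pow_two]
      nth_rewrite 2 [h1]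
      exact mul_inv_cancel₀ hμ0
    exact hμ21 h2
  have hac : Polynomial.aeval ((t : ℝ) : ℂ) (cheb h) = 0 := by
    rcases mul_eq_zero.mp hkey with h4 | h4
    · exact absurd h4 hsubne
    · exact h4
  have h9 : (RingHom.toIntAlgHom Complex.ofRealHom) (Polynomial.aeval t (cheb h)) = 0 := by
    rw [← Polynomial.aeval_algHom_apply]
    exact hac
  have h10 : ((Polynomial.aeval t (cheb h) : ℝ) : ℂ) = 0 := h9
  exact_mod_cast h10

lemma aeval_cheb_Ar (C : Matrix (Fin n) (Fin n) ℤ) (hC : IsADECartan C) (h : ℕ)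
    (hTh : Tmat C ^ h = 1) :
    Polynomial.aeval ((2:ℝ) • (1 : Matrix (Fin n) (Fin n) ℝ) - C.map ((↑) : ℤ → ℝ))
      (cheb h) = 0 := by
  classical
  have pack : ∃ (V : Matrix (Fin n) (Fin n) ℝ) (d : Fin n → ℝ),
      V * star V = 1 ∧
      (2:ℝ) • (1 : Matrix (Fin n) (Fin n) ℝ) - C.map ((↑) : ℤ → ℝ)
        = V * Matrix.diagonal d * star V ∧
      ∀ k, Polynomial.aeval (d k) (cheb h) = 0 := by
    set Ar : Matrix (Fin n) (Fin n) ℝ := (2:ℝ) • 1 - C.map ((↑) : ℤ → ℝ) with hArdef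
    have hA : Ar.IsHermitian := by
      rw [Matrix.IsHermitian]
      ext i j
      simp only [Matrix.conjTranspose_apply, hArdef, Matrix.sub_apply, Matrix.smul_apply,
        Matrix.one_apply, Matrix.map_apply, star_trivial, smul_eq_mul]
      rw [hC.symm j i]
      by_cases hij : i = j
      · subst hij; simp
      · simp [hij, Ne.symm hij]
    refine ⟨(hA.eigenvectorUnitary : Matrix (Fin n) (Fin n) ℝ), hA.eigenvalues,
      (Matrix.mem_unitaryGroup_iff).mp (hA.eigenvectorUnitary).2, ?_, ?_⟩
    · have e := hA.spectral_theorem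
      rw [Unitary.conjStarAlgAut_apply] at e
      exact e
    · intro k
      have hv := hA.mulVec_eigenvectorBasis k
      have hAr_mul : ∀ (x : Fin n → ℝ) (i : Fin n),
          (Ar *ᵥ x) i = 2 * x i - ∑ j, (C i j : ℝ) * x j := by
        intro x i
        rw [hArdef, Matrix.sub_mulVec, Matrix.smul_mulVec, Matrix.one_mulVec]
        simp only [Pi.sub_apply, Pi.smul_apply, smul_eq_mul]
        simp [Matrix.mulVec, dotProduct, Matrix.map_apply]
      set vv : Fin n → ℝ := ⇑(hA.eigenvectorBasis k) with hvvdef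
      have hv0 : vv ≠ 0 := by
        intro h0
        apply hA.eigenvectorBasis.orthonormal.ne_zero k
        ext i
        exact congrFun h0 i
      apply eig_root C hC h hTh (hA.eigenvalues k) vv hv0
      intro i
      have h1 := congrFun hv i
      rw [hAr_mul vv i] at h1
      simp only [Pi.smul_apply, smul_eq_mul] at h1
      linarith [h1]
  obtain ⟨V, d, hV1, hspec, hzero⟩ := pack
  have hV2 : star V * V = 1 := mul_eq_one_comm.mp hV1
  have hmul : ∀ f g : Fin n → ℝ,
      (V * Matrix.diagonal f * star V) * (V * Matrix.diagonal g * star V)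
        = V * Matrix.diagonal (fun k => f k * g k) * star V := by
    intro f g
    have e1 : V * Matrix.diagonal f * star V * (V * Matrix.diagonal g * star V)
        = V * (Matrix.diagonal f * (star V * V) * Matrix.diagonal g) * star V := by
      noncomm_ring
    rw [e1, hV2, mul_one, Matrix.diagonal_mul_diagonal]
  have hsub : ∀ f g : Fin n → ℝ,
      V * Matrix.diagonal f * star V - V * Matrix.diagonal g * star V
        = V * Matrix.diagonal (fun k => f k - g k) * star V := by
    intro f g
    have e1 : Matrix.diagonal (fun k => f k - g k)
        = Matrix.diagonal f - Matrix.diagonal g := by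
      ext i j
      by_cases hij : i = j
      · subst hij; simp
      · simp [Matrix.diagonal_apply_ne _ hij]
    rw [e1, Matrix.mul_sub, Matrix.sub_mul]
  have hdiag : ∀ m : ℕ, Polynomial.aeval
        ((2:ℝ) • (1 : Matrix (Fin n) (Fin n) ℝ) - C.map ((↑) : ℤ → ℝ)) (cheb m)
      = V * Matrix.diagonal (fun k => Polynomial.aeval (d k) (cheb m)) * star V := by
    intro m
    induction m using Nat.twoStepInduction with
    | zero => simp [cheb_zero]
    | one => simp [cheb_one, hV1]
    | more m ih0 ih1 =>
      calc Polynomial.aeval ((2:ℝ) • (1 : Matrix (Fin n) (Fin n) ℝ)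
              - C.map ((↑) : ℤ → ℝ)) (cheb (m + 2))
          = ((2:ℝ) • (1 : Matrix (Fin n) (Fin n) ℝ) - C.map ((↑) : ℤ → ℝ))
              * Polynomial.aeval ((2:ℝ) • (1 : Matrix (Fin n) (Fin n) ℝ)
                - C.map ((↑) : ℤ → ℝ)) (cheb (m + 1))
            - Polynomial.aeval ((2:ℝ) • (1 : Matrix (Fin n) (Fin n) ℝ)
                - C.map ((↑) : ℤ → ℝ)) (cheb m) := by
            rw [cheb_add_two, _root_.map_sub, _root_.map_mul, Polynomial.aeval_X]
        _ = V * Matrix.diagonal (fun k => Polynomial.aeval (d k) (cheb (m + 2)))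
              * star V := by
            rw [ih0, ih1, hspec, hmul, hsub]
            have e2 : (fun k => d k * (Polynomial.aeval (d k)) (cheb (m + 1))
                  - (Polynomial.aeval (d k)) (cheb m))
                = fun k => Polynomial.aeval (d k) (cheb (m + 2)) :=
              funext fun k => by
                rw [cheb_add_two, _root_.map_sub, _root_.map_mul, Polynomial.aeval_X]
            rw [e2]
  rw [hdiag h]
  rw [show (fun k => (Polynomial.aeval (d k)) (cheb h))
      = fun _ : Fin n => (0:ℝ) from funext fun k => hzero k]
  rw [Matrix.diagonal_zero]
  simp

lemma aeval_cheb_Aq (C : Matrix (Fin n) (Fin n) ℤ) (hC : IsADECartan C) (h : ℕ)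
    (hTh : Tmat C ^ h = 1) :
    Polynomial.aeval ((2:ℚ) • (1 : Matrix (Fin n) (Fin n) ℚ) - C.map ((↑) : ℤ → ℚ))
      (cheb h) = 0 := by
  classical
  set ψ : Matrix (Fin n) (Fin n) ℚ →+* Matrix (Fin n) (Fin n) ℝ :=
    (Rat.castHom ℝ).mapMatrix with hψdef
  have hinj : Function.Injective ψ := by
    intro M N hMN
    have h' : M.map (Rat.cast : ℚ → ℝ) = N.map (Rat.cast : ℚ → ℝ) := hMN
    ext i j
    have h2 := congrFun (congrFun h' i) j
    exact Rat.cast_injective h2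
  have hψA : ψ ((2:ℚ) • (1 : Matrix (Fin n) (Fin n) ℚ) - C.map ((↑) : ℤ → ℚ))
      = (2:ℝ) • (1 : Matrix (Fin n) (Fin n) ℝ) - C.map ((↑) : ℤ → ℝ) := by
    ext i j
    rw [hψdef]
    simp only [RingHom.mapMatrix_apply, Matrix.map_apply, Matrix.sub_apply, Matrix.smul_apply,
      Matrix.one_apply, smul_eq_mul]
    by_cases hij : i = j <;> simp [hij] <;> push_cast <;> ring
  have hcomm : ψ (Polynomial.aeval ((2:ℚ) • (1 : Matrix (Fin n) (Fin n) ℚ)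
        - C.map ((↑) : ℤ → ℚ)) (cheb h))
      = Polynomial.aeval (ψ ((2:ℚ) • (1 : Matrix (Fin n) (Fin n) ℚ)
        - C.map ((↑) : ℤ → ℚ))) (cheb h) :=
    (Polynomial.aeval_algHom_apply (RingHom.toIntAlgHom ψ) _ (cheb h)).symm
  apply hinj
  rw [hcomm, hψA, aeval_cheb_Ar C hC h hTh, _root_.map_zero]

/-- `A = 2·1 - C` over `ℚ`. -/
noncomputable def Aqmat (C : Matrix (Fin n) (Fin n) ℤ) : Matrix (Fin n) (Fin n) ℚ :=
  (2:ℚ) • 1 - C.map ((↑) : ℤ → ℚ)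

/-- `qq C m = cheb m` evaluated at `Aqmat C`. -/
noncomputable def qq (C : Matrix (Fin n) (Fin n) ℤ) (m : ℕ) : Matrix (Fin n) (Fin n) ℚ :=
  Polynomial.aeval (Aqmat C) (cheb m)

lemma qq_zero (C : Matrix (Fin n) (Fin n) ℤ) : qq C 0 = 0 := by
  rw [qq, cheb_zero, _root_.map_zero]

lemma qq_one (C : Matrix (Fin n) (Fin n) ℤ) : qq C 1 = 1 := by
  rw [qq, cheb_one, _root_.map_one]

lemma qq_two (C : Matrix (Fin n) (Fin n) ℤ) : qq C 2 = Aqmat C := by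
  rw [qq, show (2:ℕ) = 0 + 2 from rfl, cheb_add_two, cheb_one, cheb_zero]
  simp [Polynomial.aeval_X]

lemma qq_rec (C : Matrix (Fin n) (Fin n) ℤ) (m : ℕ) :
    qq C (m + 2) = Aqmat C * qq C (m + 1) - qq C m := by
  rw [qq, qq, qq, cheb_add_two, _root_.map_sub, _root_.map_mul, Polynomial.aeval_X]

lemma qq_kh_zero (C : Matrix (Fin n) (Fin n) ℤ) (h : ℕ) (hq : qq C h = 0) :
    ∀ k : ℕ, 1 ≤ k → qq C (k * h) = 0 := by
  have hcomm : ∀ a b : ℕ, qq C a * qq C b = qq C b * qq C a := by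
    intro a b
    rw [qq, qq, ← _root_.map_mul, ← _root_.map_mul, mul_comm]
  have hAq : ∀ a, Aqmat C * qq C a = qq C a * Aqmat C := by
    intro a
    rw [← qq_two C]
    exact hcomm 2 a
  have hshift : ∀ m, qq C (h + m) = qq C (h + 1) * qq C m := by
    intro m
    induction m using Nat.twoStepInduction with
    | zero => rw [Nat.add_zero, hq, qq_zero, mul_zero]
    | one => rw [qq_one, mul_one]
    | more m ih0 ih1 =>
      have e1 : h + (m + 2) = (h + m) + 2 := by ring
      have e2 : h + (m + 1) = (h + m) + 1 := by ring
      rw [e1, qq_rec, ← e2, ih1, ih0]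
      rw [qq_rec]
      rw [mul_sub]
      congr 1
      rw [← mul_assoc, hAq (h+1), mul_assoc]
  intro k hk
  induction k with
  | zero => omega
  | succ k ihk =>
    rcases Nat.lt_or_ge 1 (k + 1) with hk1 | hk1
    · have hkpos : 1 ≤ k := by omega
      have e : (k + 1) * h = h + k * h := by ring
      rw [e, hshift, ihk hkpos, mul_zero]
    · have : k = 0 := by omega
      subst this
      simpa using hq

/-- `d₀` : Kronecker delta. -/
def d0 (i k : Fin n) : ℚ := if i = k then 1 else 0

/-- coefficient of `X` in the entries of `z C(z)`. -/
def d1 (C : Matrix (Fin n) (Fin n) ℤ) (i k : Fin n) : ℚ := (C i k : ℚ) - 2 * d0 i k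

/-- The matrix `z·C(z)` as a matrix of power series. -/
noncomputable def Dps (C : Matrix (Fin n) (Fin n) ℤ) (i k : Fin n) : PowerSeries ℚ :=
  PowerSeries.C (d0 i k) + PowerSeries.X * PowerSeries.C (d1 C i k)
    + PowerSeries.X * (PowerSeries.X * PowerSeries.C (d0 i k))

/-- The candidate inverse as power series (shifted by one). -/
noncomputable def Eps (C : Matrix (Fin n) (Fin n) ℤ) (k j : Fin n) : PowerSeries ℚ :=
  PowerSeries.mk fun m => qq C (m + 1) k j

lemma coeff_X_mul_zero (f : PowerSeries ℚ) :
    PowerSeries.coeff 0 (PowerSeries.X * f) = 0 := by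
  rw [PowerSeries.coeff_zero_eq_constantCoeff, _root_.map_mul, PowerSeries.constantCoeff_X,
    zero_mul]

lemma coeff_DE_zero (C : Matrix (Fin n) (Fin n) ℤ) (i k j : Fin n) :
    PowerSeries.coeff 0 (Dps C i k * Eps C k j) = d0 i k * qq C 1 k j := by
  have expand : Dps C i k * Eps C k j
      = PowerSeries.C (d0 i k) * Eps C k j
        + PowerSeries.X * (PowerSeries.C (d1 C i k) * Eps C k j)
        + PowerSeries.X * (PowerSeries.X * (PowerSeries.C (d0 i k) * Eps C k j)) := by
    rw [Dps]; ring
  rw [expand, map_add, map_add, coeff_X_mul_zero, coeff_X_mul_zero,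
    PowerSeries.coeff_C_mul, Eps, PowerSeries.coeff_mk]
  ring

lemma coeff_DE_one (C : Matrix (Fin n) (Fin n) ℤ) (i k j : Fin n) :
    PowerSeries.coeff 1 (Dps C i k * Eps C k j)
      = d0 i k * qq C 2 k j + d1 C i k * qq C 1 k j := by
  have expand : Dps C i k * Eps C k j
      = PowerSeries.C (d0 i k) * Eps C k j
        + PowerSeries.X * (PowerSeries.C (d1 C i k) * Eps C k j)
        + PowerSeries.X * (PowerSeries.X * (PowerSeries.C (d0 i k) * Eps C k j)) := by
    rw [Dps]; ring
  rw [expand, map_add, map_add]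
  rw [show (1:ℕ) = 0 + 1 from rfl, PowerSeries.coeff_succ_X_mul, PowerSeries.coeff_succ_X_mul]
  rw [coeff_X_mul_zero, PowerSeries.coeff_C_mul, PowerSeries.coeff_C_mul,
    Eps, PowerSeries.coeff_mk, PowerSeries.coeff_mk]
  ring

lemma coeff_DE_two (C : Matrix (Fin n) (Fin n) ℤ) (i k j : Fin n) (m : ℕ) :
    PowerSeries.coeff (m + 2) (Dps C i k * Eps C k j)
      = d0 i k * qq C (m + 3) k j + d1 C i k * qq C (m + 2) k j
        + d0 i k * qq C (m + 1) k j := by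
  have expand : Dps C i k * Eps C k j
      = PowerSeries.C (d0 i k) * Eps C k j
        + PowerSeries.X * (PowerSeries.C (d1 C i k) * Eps C k j)
        + PowerSeries.X * (PowerSeries.X * (PowerSeries.C (d0 i k) * Eps C k j)) := by
    rw [Dps]; ring
  rw [expand, map_add, map_add]
  rw [show m + 2 = (m + 1) + 1 from rfl, PowerSeries.coeff_succ_X_mul,
    PowerSeries.coeff_succ_X_mul, PowerSeries.coeff_succ_X_mul]
  rw [PowerSeries.coeff_C_mul, PowerSeries.coeff_C_mul, PowerSeries.coeff_C_mul,
    Eps, PowerSeries.coeff_mk, PowerSeries.coeff_mk, PowerSeries.coeff_mk]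

lemma sum_d0_mul (i j : Fin n) (M : Matrix (Fin n) (Fin n) ℚ) :
    ∑ k, d0 i k * M k j = M i j := by
  rw [Finset.sum_congr rfl (fun k _ => by rw [d0, ite_mul, one_mul, zero_mul])]
  rw [Finset.sum_ite_eq]
  simp

lemma sum_d1_mul (C : Matrix (Fin n) (Fin n) ℤ) (i j : Fin n) (M : Matrix (Fin n) (Fin n) ℚ) :
    ∑ k, d1 C i k * M k j = (∑ k, (C i k : ℚ) * M k j) - 2 * M i j := by
  rw [Finset.sum_congr rfl (fun k _ => by rw [d1, sub_mul, mul_assoc])]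
  rw [Finset.sum_sub_distrib, ← Finset.mul_sum, sum_d0_mul]

lemma entry_Aq_mul (C : Matrix (Fin n) (Fin n) ℤ) (i j : Fin n)
    (M : Matrix (Fin n) (Fin n) ℚ) :
    (Aqmat C * M) i j = 2 * M i j - ∑ k, (C i k : ℚ) * M k j := by
  rw [Matrix.mul_apply]
  rw [Finset.sum_congr rfl (fun k _ => by
    rw [show Aqmat C i k * M k j
        = 2 * ((if i = k then (1:ℚ) else 0) * M k j) - (C i k : ℚ) * M k j from by
      simp only [Aqmat, Matrix.sub_apply, Matrix.smul_apply, Matrix.one_apply,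
        Matrix.map_apply, smul_eq_mul]
      ring])]
  rw [Finset.sum_sub_distrib, ← Finset.mul_sum]
  congr 2
  rw [Finset.sum_congr rfl (fun k _ => by rw [ite_mul, one_mul, zero_mul])]
  rw [Finset.sum_ite_eq]
  simp

lemma DE_eq (C : Matrix (Fin n) (Fin n) ℤ) (hC : IsADECartan C) (i j : Fin n) :
    (∑ k, Dps C i k * Eps C k j) = if i = j then (1 : PowerSeries ℚ) else 0 := by
  ext m
  rw [map_sum]
  match m with
  | 0 =>
    rw [Finset.sum_congr rfl (fun k _ => coeff_DE_zero C i k j)]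
    have e1 : ∑ k, d0 i k * qq C 1 k j = (qq C 1) i j := sum_d0_mul i j _
    rw [e1, qq_one]
    by_cases hij : i = j <;> simp [hij, Matrix.one_apply]
  | 1 =>
    rw [Finset.sum_congr rfl (fun k _ => coeff_DE_one C i k j)]
    rw [Finset.sum_add_distrib, sum_d0_mul, sum_d1_mul]
    rw [qq_two, qq_one]
    have e2 : ∑ k, (C i k : ℚ) * (1 : Matrix (Fin n) (Fin n) ℚ) k j = (C i j : ℚ) := by
      rw [Finset.sum_congr rfl (fun k _ => by
        rw [Matrix.one_apply, mul_ite, mul_one, mul_zero])]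
      rw [Finset.sum_ite_eq']
      simp
    rw [e2]
    have e3 : Aqmat C i j = 2 * (1 : Matrix (Fin n) (Fin n) ℚ) i j - (C i j : ℚ) := by
      simp only [Aqmat, Matrix.sub_apply, Matrix.smul_apply, Matrix.map_apply, smul_eq_mul]
    rw [e3]
    by_cases hij : i = j <;> simp [hij, Matrix.one_apply, PowerSeries.coeff_one]
  | (m + 2) =>
    rw [Finset.sum_congr rfl (fun k _ => coeff_DE_two C i k j m)]
    rw [Finset.sum_add_distrib, Finset.sum_add_distrib, sum_d0_mul, sum_d0_mul, sum_d1_mul]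
    have hrec := qq_rec C (m + 1)
    have hrec' : qq C (m + 3) i j = (Aqmat C * qq C (m + 2)) i j - qq C (m + 1) i j := by
      have := congrFun (congrFun hrec i) j
      rw [show m + 1 + 2 = m + 3 from rfl, show m + 1 + 1 = m + 2 from rfl] at this
      rw [this]
      rfl
    rw [hrec', entry_Aq_mul]
    have hz : PowerSeries.coeff (m + 2) (if i = j then (1 : PowerSeries ℚ) else 0) = 0 := by
      by_cases hij : i = j <;> simp [hij, PowerSeries.coeff_one]
    rw [hz]
    ring

/-- Candidate inverse of the quantum Cartan matrix. -/
noncomputable def Gmat (C : Matrix (Fin n) (Fin n) ℤ) :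
    Matrix (Fin n) (Fin n) (LaurentSeries ℚ) :=
  Matrix.of fun i j =>
    (HahnSeries.single (1:ℤ) (1:ℚ)) * HahnSeries.ofPowerSeries ℤ ℚ (Eps C i j)

lemma qCartan_mul_G (C : Matrix (Fin n) (Fin n) ℤ) (hC : IsADECartan C) :
    qCartan C * Gmat C = 1 := by
  have e1 : (HahnSeries.single (1:ℤ) (1:ℚ)) * HahnSeries.single (1:ℤ) (1:ℚ)
      = HahnSeries.single (2:ℤ) (1:ℚ) := by
    rw [HahnSeries.single_mul_single]
    norm_num
  have e2 : (HahnSeries.single (-1:ℤ) (1:ℚ)) * HahnSeries.single (1:ℤ) (1:ℚ) = 1 := by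
    rw [HahnSeries.single_mul_single]
    norm_num
  ext i j
  rw [Matrix.mul_apply]
  have hfac : ∀ k, qCartan C i k * Gmat C k j
      = HahnSeries.ofPowerSeries ℤ ℚ (Dps C i k * Eps C k j) := by
    intro k
    rw [_root_.map_mul]
    have eG : Gmat C k j = HahnSeries.single (1:ℤ) (1:ℚ)
        * HahnSeries.ofPowerSeries ℤ ℚ (Eps C k j) := rfl
    by_cases hik : i = k
    · subst hik
      have hd1 : d1 C i i = 0 := by
        rw [d1, d0, if_pos rfl, hC.diag i]
        push_cast
        ring
      have eD : HahnSeries.ofPowerSeries ℤ ℚ (Dps C i i)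
          = 1 + HahnSeries.single (2:ℤ) (1:ℚ) := by
        rw [Dps, map_add, map_add, _root_.map_mul, _root_.map_mul, _root_.map_mul,
          HahnSeries.ofPowerSeries_X, HahnSeries.ofPowerSeries_C, HahnSeries.ofPowerSeries_C,
          hd1]
        rw [d0, if_pos rfl]
        rw [_root_.map_one, _root_.map_zero, mul_zero, add_zero, mul_one, e1]
      have eQ : qCartan C i i = HahnSeries.single (1:ℤ) (1:ℚ)
          + HahnSeries.single (-1:ℤ) (1:ℚ) := by
        rw [qCartan]
        simp
      rw [eQ, eG, eD]
      calc (HahnSeries.single (1:ℤ) (1:ℚ) + HahnSeries.single (-1:ℤ) (1:ℚ))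
            * (HahnSeries.single (1:ℤ) (1:ℚ) * HahnSeries.ofPowerSeries ℤ ℚ (Eps C i j))
          = (HahnSeries.single (1:ℤ) (1:ℚ) * HahnSeries.single (1:ℤ) (1:ℚ))
              * HahnSeries.ofPowerSeries ℤ ℚ (Eps C i j)
            + (HahnSeries.single (-1:ℤ) (1:ℚ) * HahnSeries.single (1:ℤ) (1:ℚ))
              * HahnSeries.ofPowerSeries ℤ ℚ (Eps C i j) := by ring
        _ = HahnSeries.single (2:ℤ) (1:ℚ) * HahnSeries.ofPowerSeries ℤ ℚ (Eps C i j)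
            + 1 * HahnSeries.ofPowerSeries ℤ ℚ (Eps C i j) := by rw [e1, e2]
        _ = (1 + HahnSeries.single (2:ℤ) (1:ℚ)) * HahnSeries.ofPowerSeries ℤ ℚ (Eps C i j) := by
            ring
    · have hd0 : d0 i k = 0 := by rw [d0, if_neg hik]
      have eD : HahnSeries.ofPowerSeries ℤ ℚ (Dps C i k)
          = HahnSeries.single (1:ℤ) (1:ℚ) * HahnSeries.C ((C i k : ℚ)) := by
        rw [Dps, map_add, map_add, _root_.map_mul, _root_.map_mul, _root_.map_mul,
          HahnSeries.ofPowerSeries_X, HahnSeries.ofPowerSeries_C, HahnSeries.ofPowerSeries_C,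
          hd0]
        rw [d1, hd0]
        simp
      have eQ : qCartan C i k = ((C i k : ℤ) : LaurentSeries ℚ) := by
        rw [qCartan]
        simp [hik]
      have eInt : ((C i k : ℤ) : LaurentSeries ℚ) = HahnSeries.C ((C i k : ℚ)) := by
        have h3 := map_intCast (HahnSeries.C : ℚ →+* HahnSeries ℤ ℚ) (C i k)
        rw [← h3]
      rw [eQ, eG, eD, eInt]
      ring
  rw [Finset.sum_congr rfl (fun k _ => hfac k), ← map_sum, DE_eq C hC i j]
  by_cases hij : i = j <;> simp [hij, Matrix.one_apply]

lemma qCartan_inv (C : Matrix (Fin n) (Fin n) ℤ) (hC : IsADECartan C) :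
    (qCartan C)⁻¹ = Gmat C :=
  Matrix.inv_eq_right_inv (qCartan_mul_G C hC)

end S6

/-- Vanishing at multiples of the Coxeter number: `c̃_{ij}(kh) = 0`
for all `i, j` and all integers `k ≥ 1`. -/
theorem statement6 {n : ℕ} (hn : 0 < n) (C : Matrix (Fin n) (Fin n) ℤ)
    (hC : IsADECartan C) (ct : Fin n → Fin n → ℤ → ℤ)
    (hct : ∀ i j ℓ, ((qCartan C)⁻¹ i j).coeff ℓ = (ct i j ℓ : ℚ))
    (h : ℕ) (hpos : 0 < h) (hper : (coxeterElem C)^[h] = id)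
    (hmin : ∀ k : ℕ, 0 < k → k < h → (coxeterElem C)^[k] ≠ id) :
    ∀ (i j : Fin n) (k : ℕ), 1 ≤ k → ct i j ((k * h : ℕ) : ℤ) = 0 := by
  intro i j k hk
  have hTh : S6.Tmat C ^ h = 1 := S6.Tpow_eq_one C h hper
  have hqh : S6.qq C h = 0 := by
    rw [S6.qq, show S6.Aqmat C = (2:ℚ) • (1 : Matrix (Fin n) (Fin n) ℚ)
        - C.map ((↑) : ℤ → ℚ) from rfl]
    exact S6.aeval_cheb_Aq C hC h hTh
  have hq0 : S6.qq C (k * h) = 0 := S6.qq_kh_zero C h hqh k hk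
  have hcoeff := hct i j ((k * h : ℕ) : ℤ)
  rw [S6.qCartan_inv C hC] at hcoeff
  have hkh : 0 < k * h := Nat.mul_pos hk hpos
  have hc2 : (S6.Gmat C i j).coeff ((k * h : ℕ) : ℤ) = S6.qq C (k * h) i j := by
    show ((HahnSeries.single (1:ℤ) (1:ℚ))
        * HahnSeries.ofPowerSeries ℤ ℚ (S6.Eps C i j)).coeff _ = _
    have hsucc : (k * h - 1 : ℕ) + 1 = k * h := Nat.succ_pred_eq_of_pos hkh
    have heq : ((k * h : ℕ) : ℤ) = ((k * h - 1 : ℕ) : ℤ) + 1 := by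
      rw [← hsucc]
      push_cast
      ring
    rw [heq, HahnSeries.coeff_single_mul_add, one_mul,
      HahnSeries.ofPowerSeries_apply_coeff, S6.Eps, PowerSeries.coeff_mk, hsucc]
  rw [hc2, hq0] at hcoeff
  simp only [Matrix.zero_apply] at hcoeff
  exact_mod_cast hcoeff.symm
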